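/- Fix n ≥ 1 and s ∈ (0,1). Let u : ℝⁿ → ℝ be bounded and continuous. Then for every x₀ ∈ ℝⁿ, the convolution K_y ∗ u(x₀) = ∫_{ℝⁿ} K_y(x₀ − x) u(x) dx converges to u(x₀) as y → 0⁺; that is, the Poisson-type extension attains the boundary datum u continuously on {y = 0}. -/

import Mathlib

open MeasureTheory Real Filter

/-- The Poisson-type kernel `K_y(x) = C_{n,s} · y^{2s} / (|x|² + y²)^{n/2+s}`, where
`C_{n,s} = Γ(s + n/2) / (π^{n/2} Γ(s))`. -/
noncomputable def poissonTypeKernel (n : ℕ) (s : ℝ) (y : ℝ) (x : EuclideanSpace ℝ (Fin n)) : ℝ :=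
  (Real.Gamma (s + n / 2) / (Real.pi ^ ((n : ℝ) / 2) * Real.Gamma s))
    * y ^ (2 * s) / (‖x‖ ^ 2 + y ^ 2) ^ ((n : ℝ) / 2 + s)

section Aux


lemma real_beta_integral {a b : ℝ} (ha : 0 < a) (hb : 0 < b) :
    ∫ x in Set.Ioo (0:ℝ) 1, x ^ (a - 1) * (1 - x) ^ (b - 1) =
      Real.Gamma a * Real.Gamma b / Real.Gamma (a + b) := by
  have hc : Complex.Gamma a * Complex.Gamma b
      = Complex.Gamma (a + b) * Complex.betaIntegral a b :=
    Complex.Gamma_mul_Gamma_eq_betaIntegral (by simpa using ha) (by simpa using hb)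
  have hbeta : Complex.betaIntegral a b
      = ((∫ x in (0:ℝ)..1, x ^ (a - 1) * (1 - x) ^ (b - 1) : ℝ) : ℂ) := by
    rw [Complex.betaIntegral, ← intervalIntegral.integral_ofReal]
    refine intervalIntegral.integral_congr fun x hx => ?_
    rw [Set.uIcc_of_le zero_le_one] at hx
    rw [Complex.ofReal_mul, Complex.ofReal_cpow hx.1 (a - 1),
      Complex.ofReal_cpow (by linarith [hx.2] : (0:ℝ) ≤ 1 - x) (b - 1)]
    push_cast
    ring
  rw [hbeta, ← Complex.ofReal_add, Complex.Gamma_ofReal, Complex.Gamma_ofReal,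
    Complex.Gamma_ofReal, ← Complex.ofReal_mul, ← Complex.ofReal_mul,
    Complex.ofReal_inj] at hc
  rw [intervalIntegral.integral_of_le zero_le_one,
    MeasureTheory.integral_Ioc_eq_integral_Ioo] at hc
  have hG : Real.Gamma (a + b) ≠ 0 := (Real.Gamma_pos_of_pos (by linarith)).ne'
  rw [eq_div_iff hG]
  linarith [hc]

lemma radial_beta {a b : ℝ} (ha : 0 < a) (hb : 0 < b) :
    ∫ r in Set.Ioi (0:ℝ), r ^ (2 * a - 1) * (1 + r ^ 2) ^ (-(a + b)) =
      Real.Gamma a * Real.Gamma b / (2 * Real.Gamma (a + b)) := by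
  have himg : (fun r : ℝ => r ^ 2 / (1 + r ^ 2)) '' Set.Ioi 0 = Set.Ioo 0 1 := by
    ext x
    constructor
    · rintro ⟨r, hr, rfl⟩
      have hr0 : (0:ℝ) < r := hr
      have h1 : (0:ℝ) < 1 + r ^ 2 := by positivity
      exact ⟨by positivity, by rw [div_lt_one h1]; nlinarith⟩
    · rintro ⟨hx0, hx1⟩
      have h1x : (0:ℝ) < 1 - x := by linarith
      refine ⟨Real.sqrt (x / (1 - x)), Real.sqrt_pos.2 (div_pos hx0 h1x), ?_⟩
      have hxx : (0:ℝ) ≤ x / (1 - x) := (div_pos hx0 h1x).le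
      simp only [Real.sq_sqrt hxx]
      field_simp
      ring
  have hinj : Set.InjOn (fun r : ℝ => r ^ 2 / (1 + r ^ 2)) (Set.Ioi 0) := by
    intro r hr t ht h
    have hr0 : (0:ℝ) < r := hr
    have ht0 : (0:ℝ) < t := ht
    have h1 : (0:ℝ) < 1 + r ^ 2 := by positivity
    have h2 : (0:ℝ) < 1 + t ^ 2 := by positivity
    simp only at h
    rw [div_eq_div_iff h1.ne' h2.ne'] at h
    have hsq : (r - t) * (r + t) = 0 := by nlinarith
    rcases mul_eq_zero.1 hsq with h' | h'
    · linarith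
    · linarith
  have hderiv : ∀ r ∈ Set.Ioi (0:ℝ), HasDerivWithinAt (fun r : ℝ => r ^ 2 / (1 + r ^ 2))
      (2 * r / (1 + r ^ 2) ^ 2) (Set.Ioi 0) r := by
    intro r hr
    have h1 : (1:ℝ) + r ^ 2 ≠ 0 := by positivity
    have h := (hasDerivAt_pow 2 r).div ((hasDerivAt_const r (1:ℝ)).add (hasDerivAt_pow 2 r)) h1
    exact (h.congr_deriv (by simp only [Pi.add_apply]; ring)).hasDerivWithinAt
  have key := integral_image_eq_integral_abs_deriv_smul measurableSet_Ioi hderiv hinj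
    (fun x : ℝ => x ^ (a - 1) * (1 - x) ^ (b - 1))
  rw [himg, real_beta_integral ha hb] at key
  have congr1 : ∫ r in Set.Ioi (0:ℝ), |2 * r / (1 + r ^ 2) ^ 2| •
        ((r ^ 2 / (1 + r ^ 2)) ^ (a - 1) * (1 - r ^ 2 / (1 + r ^ 2)) ^ (b - 1))
      = ∫ r in Set.Ioi (0:ℝ), 2 * (r ^ (2 * a - 1) * (1 + r ^ 2) ^ (-(a + b))) := by
    refine setIntegral_congr_fun measurableSet_Ioi fun r hr => ?_
    have hr0 : (0:ℝ) < r := hr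
    have h1 : (0:ℝ) < 1 + r ^ 2 := by positivity
    have h2 : 1 - r ^ 2 / (1 + r ^ 2) = (1 + r ^ 2)⁻¹ := by field_simp; ring
    have h1 : (0:ℝ) < 1 + r ^ 2 := by positivity
    have h2 : 1 - r ^ 2 / (1 + r ^ 2) = (1 + r ^ 2)⁻¹ := by field_simp; ring
    rw [smul_eq_mul, h2, abs_of_pos (by positivity)]
    set P := 1 + r ^ 2 with hP
    have hP0 : (0:ℝ) < P := h1
    rw [Real.div_rpow (sq_nonneg r) hP0.le, ← Real.rpow_natCast r 2,
      ← Real.rpow_neg_one P, ← Real.rpow_natCast P 2, ← Real.rpow_one r]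
    simp only [← Real.rpow_mul hr0.le, ← Real.rpow_mul hP0.le]
    rw [div_eq_mul_inv, ← Real.rpow_neg hP0.le, div_eq_mul_inv, ← Real.rpow_neg hP0.le]
    rw [show ((1:ℝ) * (2:ℕ) * (a - 1)) = 2*a - 2 by push_cast; ring,
      show ((1:ℝ) * (2 * a - 1)) = 2*a-1 by ring,
      show (-((2:ℕ):ℝ)) = -2 by push_cast; ring,
      show ((-1:ℝ) * (b-1)) = 1 - b by ring]
    rw [show (2:ℝ) * r ^ (1:ℝ) * P ^ (-2:ℝ) * (r ^ (2*a - 2) * P ^ (-(a-1)) * P ^ (1 - b))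
        = 2 * ((r ^ (1:ℝ) * r ^ (2*a-2)) * (P ^ (-2:ℝ) * P ^ (-(a-1)) * P ^ (1-b))) by ring]
    rw [← Real.rpow_add hr0, ← Real.rpow_add hP0, ← Real.rpow_add hP0]
    rw [show (1:ℝ) + (2*a - 2) = 2*a - 1 by ring, show (-2:ℝ) + -(a-1) + (1-b) = -(a+b) by ring]
  rw [congr1, MeasureTheory.integral_const_mul 2] at key
  have hG : Real.Gamma (a + b) ≠ 0 := (Real.Gamma_pos_of_pos (by linarith)).ne'
  rw [div_eq_iff hG] at key
  rw [eq_div_iff (by simp [hG] : 2 * Real.Gamma (a + b) ≠ 0)]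
  linear_combination -key

variable {n : ℕ} {s : ℝ}

lemma poissonTypeKernel_one_eq (hn : 1 ≤ n) (hs0 : 0 < s) (x : EuclideanSpace ℝ (Fin n)) :
    poissonTypeKernel n s 1 x =
      (Real.Gamma (s + n / 2) / (Real.pi ^ ((n : ℝ) / 2) * Real.Gamma s)) *
        ((1 + ‖x‖ ^ 2) ^ (-((n : ℝ) + 2 * s) / 2)) := by
  have h1 : (0:ℝ) < 1 + ‖x‖ ^ 2 := by positivity
  rw [poissonTypeKernel, Real.one_rpow, one_pow, mul_one, add_comm (‖x‖ ^ 2) 1,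
    show (-((n : ℝ) + 2 * s) / 2) = -((n : ℝ)/2 + s) by ring, Real.rpow_neg h1.le,
    div_eq_mul_inv]

lemma poissonTypeKernel_one_nonneg (hn : 1 ≤ n) (hs0 : 0 < s) (x : EuclideanSpace ℝ (Fin n)) :
    0 ≤ poissonTypeKernel n s 1 x := by
  rw [poissonTypeKernel_one_eq hn hs0]
  have h1 : 0 < Real.Gamma (s + n / 2) := Real.Gamma_pos_of_pos (by positivity)
  have h2 : 0 < Real.Gamma s := Real.Gamma_pos_of_pos hs0
  positivity

lemma poissonTypeKernel_one_continuous (hn : 1 ≤ n) (hs0 : 0 < s) :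
    Continuous (poissonTypeKernel n s 1) := by
  have : Continuous fun x : EuclideanSpace ℝ (Fin n) =>
      (Real.Gamma (s + n / 2) / (Real.pi ^ ((n : ℝ) / 2) * Real.Gamma s)) *
        ((1 + ‖x‖ ^ 2) ^ (-((n : ℝ) + 2 * s) / 2)) := by
    refine continuous_const.mul ?_
    refine Continuous.rpow_const ?_ fun x => Or.inl (by positivity)
    exact continuous_const.add ((continuous_norm).pow 2)
  exact this.congr fun x => (poissonTypeKernel_one_eq hn hs0 x).symm

lemma poissonTypeKernel_one_integrable (hn : 1 ≤ n) (hs0 : 0 < s) :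
    Integrable (poissonTypeKernel n s 1) (volume : Measure (EuclideanSpace ℝ (Fin n))) := by
  have hlt : (Module.finrank ℝ (EuclideanSpace ℝ (Fin n)) : ℝ) < (n : ℝ) + 2 * s := by
    rw [finrank_euclideanSpace_fin]; linarith
  have h := (integrable_rpow_neg_one_add_norm_sq (E := EuclideanSpace ℝ (Fin n))
    (μ := volume) hlt).const_mul
    (Real.Gamma (s + n / 2) / (Real.pi ^ ((n : ℝ) / 2) * Real.Gamma s))
  exact h.congr (Filter.Eventually.of_forall fun x => (poissonTypeKernel_one_eq hn hs0 x).symm)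

lemma integral_poissonTypeKernel_one (hn : 1 ≤ n) (hs0 : 0 < s) :
    ∫ x : EuclideanSpace ℝ (Fin n), poissonTypeKernel n s 1 x = 1 := by
  haveI : NeZero n := ⟨by omega⟩
  haveI : Nontrivial (EuclideanSpace ℝ (Fin n)) :=
    Module.nontrivial_of_finrank_pos (R := ℝ) (by rw [finrank_euclideanSpace_fin]; omega)
  set C := Real.Gamma (s + n / 2) / (Real.pi ^ ((n : ℝ) / 2) * Real.Gamma s) with hC
  have hrw : ∀ x : EuclideanSpace ℝ (Fin n), poissonTypeKernel n s 1 x =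
      (fun t : ℝ => C * ((1 + t ^ 2) ^ (-((n : ℝ) + 2 * s) / 2))) ‖x‖ := fun x =>
    poissonTypeKernel_one_eq hn hs0 x
  rw [funext hrw, MeasureTheory.integral_fun_norm_addHaar volume
    (fun t : ℝ => C * ((1 + t ^ 2) ^ (-((n : ℝ) + 2 * s) / 2)))]
  have hrad : ∫ t in Set.Ioi (0:ℝ),
      t ^ (Module.finrank ℝ (EuclideanSpace ℝ (Fin n)) - 1) •
        (C * ((1 + t ^ 2) ^ (-((n : ℝ) + 2 * s) / 2)))
      = C * (Real.Gamma ((n:ℝ)/2) * Real.Gamma s / (2 * Real.Gamma ((n:ℝ)/2 + s))) := by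
    rw [← radial_beta (a := (n:ℝ)/2) (b := s) (by positivity) hs0, ← integral_const_mul]
    refine setIntegral_congr_fun measurableSet_Ioi fun t ht => ?_
    have ht0 : (0:ℝ) < t := ht
    rw [smul_eq_mul, finrank_euclideanSpace_fin,
      show (2 * ((n:ℝ)/2) - 1) = ((n - 1 : ℕ) : ℝ) by
        push_cast [Nat.cast_sub hn]; ring,
      Real.rpow_natCast,
      show (-((n:ℝ)/2 + s)) = -((n : ℝ) + 2 * s) / 2 by ring]
    ring
  rw [hrad, finrank_euclideanSpace_fin, measureReal_def, EuclideanSpace.volume_ball, Fintype.card_fin]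
  have hG2 : 0 < Real.Gamma ((n:ℝ)/2) := Real.Gamma_pos_of_pos (by positivity)
  have hGs : 0 < Real.Gamma s := Real.Gamma_pos_of_pos hs0
  have hGns : 0 < Real.Gamma ((n:ℝ)/2 + s) := Real.Gamma_pos_of_pos (by positivity)
  have htoReal : ((ENNReal.ofReal (1:ℝ)) ^ n *
      ENNReal.ofReal (Real.sqrt π ^ n / Real.Gamma (n / 2 + 1))).toReal
      = Real.sqrt π ^ n / Real.Gamma ((n:ℝ) / 2 + 1) := by
    rw [ENNReal.ofReal_one, one_pow, one_mul, ENNReal.toReal_ofReal]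
    have : 0 < Real.Gamma ((n:ℝ) / 2 + 1) := Real.Gamma_pos_of_pos (by positivity)
    positivity
  rw [htoReal]
  have hπ : (Real.sqrt π) ^ n = π ^ ((n:ℝ)/2) := by
    rw [Real.sqrt_eq_rpow, ← Real.rpow_natCast (π ^ ((1:ℝ)/2)) n,
      ← Real.rpow_mul Real.pi_pos.le]
    congr 1
    ring
  have hG1 : Real.Gamma ((n:ℝ)/2 + 1) = ((n:ℝ)/2) * Real.Gamma ((n:ℝ)/2) :=
    Real.Gamma_add_one (by positivity)
  rw [hπ, hG1, hC, nsmul_eq_mul, smul_eq_mul,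
    show Real.Gamma (s + (n:ℝ)/2) = Real.Gamma ((n:ℝ)/2 + s) by rw [add_comm]]
  have hπ2 : (0:ℝ) < π ^ ((n:ℝ)/2) := Real.rpow_pos_of_pos Real.pi_pos _
  have hn0 : (0:ℝ) < n := by exact_mod_cast Nat.pos_of_ne_zero (by omega)
  field_simp

lemma poissonTypeKernel_scale {y : ℝ} (hy : 0 < y) (z : EuclideanSpace ℝ (Fin n)) :
    y ^ n * poissonTypeKernel n s y (y • z) = poissonTypeKernel n s 1 z := by
  have hz1 : (0:ℝ) < ‖z‖ ^ 2 + 1 := by positivity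
  have hb : ‖y • z‖ ^ 2 + y ^ 2 = y ^ 2 * (‖z‖ ^ 2 + 1 ^ 2) := by
    rw [norm_smul, Real.norm_eq_abs, abs_of_pos hy]; ring
  rw [poissonTypeKernel, poissonTypeKernel, hb, one_pow,
    Real.mul_rpow (by positivity) (by positivity),
    show (y:ℝ) ^ 2 = y ^ ((2:ℕ):ℝ) from (Real.rpow_natCast y 2).symm,
    ← Real.rpow_mul hy.le, Real.one_rpow]
  set C := Real.Gamma (s + n / 2) / (Real.pi ^ ((n : ℝ) / 2) * Real.Gamma s) with hC
  have hkey : (y:ℝ) ^ n * y ^ (2 * s) = y ^ (((2:ℕ):ℝ) * ((n:ℝ)/2 + s)) := by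
    rw [← Real.rpow_natCast y n, ← Real.rpow_add hy]
    congr 1
    push_cast
    ring
  have hy2 : (0:ℝ) < y ^ (((2:ℕ):ℝ) * ((n:ℝ)/2 + s)) := Real.rpow_pos_of_pos hy _
  have hz2 : (0:ℝ) < (‖z‖ ^ 2 + 1) ^ ((n:ℝ)/2 + s) := Real.rpow_pos_of_pos hz1 _
  rw [mul_div_assoc', mul_left_comm, hkey]
  rw [mul_one, mul_div_assoc, div_mul_cancel_left₀ hy2.ne', ← div_eq_mul_inv]

lemma scaled_integral (u : EuclideanSpace ℝ (Fin n) → ℝ)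
    (x₀ : EuclideanSpace ℝ (Fin n)) {y : ℝ} (hy : 0 < y) :
    ∫ x : EuclideanSpace ℝ (Fin n), poissonTypeKernel n s y (x₀ - x) * u x
      = ∫ z : EuclideanSpace ℝ (Fin n), poissonTypeKernel n s 1 z * u (x₀ - y • z) := by
  have h1 : ∫ x : EuclideanSpace ℝ (Fin n), poissonTypeKernel n s y (x₀ - x) * u x
      = ∫ x : EuclideanSpace ℝ (Fin n), poissonTypeKernel n s y x * u (x₀ - x) := by
    have h := MeasureTheory.integral_sub_left_eq_self
      (μ := (volume : Measure (EuclideanSpace ℝ (Fin n))))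
      (fun x => poissonTypeKernel n s y x * u (x₀ - x)) x₀
    simpa using h
  rw [h1]
  have h2 := MeasureTheory.Measure.integral_comp_smul_of_nonneg
    (μ := (volume : Measure (EuclideanSpace ℝ (Fin n))))
    (fun x => poissonTypeKernel n s y x * u (x₀ - x)) y (hR := hy.le)
  rw [finrank_euclideanSpace_fin, smul_eq_mul] at h2
  have hyn : (0:ℝ) < y ^ n := by positivity
  have h3 : ∫ x : EuclideanSpace ℝ (Fin n), poissonTypeKernel n s y x * u (x₀ - x)
      = y ^ n * ∫ x : EuclideanSpace ℝ (Fin n),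
          poissonTypeKernel n s y (y • x) * u (x₀ - y • x) := by
    rw [h2, ← mul_assoc, mul_inv_cancel₀ hyn.ne', one_mul]
  rw [h3, ← integral_const_mul]
  congr 1
  funext z
  rw [← mul_assoc, poissonTypeKernel_scale hy z]

end Aux

/-- For bounded continuous `u : ℝⁿ → ℝ` and every `x₀ ∈ ℝⁿ`, the
convolution `K_y ∗ u(x₀) = ∫_{ℝⁿ} K_y(x₀ − x) u(x) dx` converges to `u(x₀)` as
`y → 0⁺`: the Poisson-type extension attains the boundary datum `u` continuously. -/
theorem poisson_extension_tendsto_boundary_datum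
    (n : ℕ) (hn : 1 ≤ n) (s : ℝ) (hs : s ∈ Set.Ioo (0 : ℝ) 1)
    (u : EuclideanSpace ℝ (Fin n) → ℝ) (hu_cont : Continuous u)
    (hu_bdd : ∃ M : ℝ, ∀ x, |u x| ≤ M)
    (x₀ : EuclideanSpace ℝ (Fin n)) :
    Tendsto (fun y : ℝ => ∫ x : EuclideanSpace ℝ (Fin n), poissonTypeKernel n s y (x₀ - x) * u x)
      (nhdsWithin 0 (Set.Ioi 0)) (nhds (u x₀)) := by
  obtain ⟨M, hM⟩ := hu_bdd
  have hs0 : 0 < s := hs.1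
  have hM0 : 0 ≤ M := le_trans (abs_nonneg _) (hM 0)
  have hmain : Tendsto (fun y : ℝ => ∫ z : EuclideanSpace ℝ (Fin n),
      poissonTypeKernel n s 1 z * u (x₀ - y • z))
      (nhdsWithin 0 (Set.Ioi 0)) (nhds (u x₀)) := by
    have hval : u x₀ = ∫ z : EuclideanSpace ℝ (Fin n), poissonTypeKernel n s 1 z * u x₀ := by
      rw [integral_mul_const, integral_poissonTypeKernel_one hn hs0, one_mul]
    rw [hval]
    refine tendsto_integral_filter_of_dominated_convergence
      (fun z => M * poissonTypeKernel n s 1 z) ?_ ?_ ?_ ?_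
    · refine Filter.Eventually.of_forall fun y => ?_
      exact ((poissonTypeKernel_one_continuous hn hs0).mul
        (hu_cont.comp (continuous_const.sub ((continuous_const (y := y)).smul continuous_id)))).aestronglyMeasurable
    · refine Filter.Eventually.of_forall fun y => ?_
      refine Filter.Eventually.of_forall fun z => ?_
      have h0 := poissonTypeKernel_one_nonneg hn hs0 z
      rw [Real.norm_eq_abs, abs_mul, abs_of_nonneg h0]
      rw [mul_comm M _]
      exact mul_le_mul_of_nonneg_left (hM _) h0
    · exact (poissonTypeKernel_one_integrable hn hs0).const_mul M
    · refine Filter.Eventually.of_forall fun z => ?_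
      have hc : Tendsto (fun y : ℝ => x₀ - y • z) (nhdsWithin 0 (Set.Ioi 0)) (nhds x₀) := by
        have : Tendsto (fun y : ℝ => x₀ - y • z) (nhds 0) (nhds (x₀ - (0:ℝ) • z)) :=
          (continuous_const.sub (continuous_id.smul continuous_const)).tendsto 0
        simpa using this.mono_left nhdsWithin_le_nhds
      exact (hu_cont.tendsto x₀).comp hc |>.const_mul _
  refine Tendsto.congr' ?_ hmain
  filter_upwards [self_mem_nhdsWithin] with y hy
  exact (scaled_integral u x₀ (Set.mem_Ioi.mp hy)).symm
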